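/- Let k : ℕ with k ≥ 2 and let q : ℝ with 0 ≤ q < 1/2. For s : Fin k → Bool, let w(s) = ∏_{i : Fin k} (if s i then q else 1-q) be its i.i.d. Bernoulli(q) weight, and let the decoded bit be Maj(s) := decide (2 · card {i : Fin (k-1) | s i.castSucc ≠ s (Fin.last (k-1))} ≥ k - 1), the majority (ties broken towards true) of the k-1 bits s_i XOR s_k. Then the decoding failure probability satisfies ∑_{s : Fin k → Bool} w(s) · (if Maj(s) ≠ s (Fin.last (k-1)) then 1 else 0) ≤ (4·q·(1-q))^{(k-1)/2}, where the right-hand side is a real power with exponent (k-1)/2. That is, the repetition-code distillation gadget reconstructs the root bit from the k-1 leaf bits, failing with probability exponentially small in k. -/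

import Mathlib

open Finset

/-- The repetition-code distillation gadget: given `k` i.i.d. Bernoulli(`q`) bits,
the majority of the `k-1` bits `s_i ⊕ s_root` fails to reconstruct the root bit with
probability at most `(4q(1-q))^{(k-1)/2}`. -/
lemma aux_pow_le (q : ℝ) (hq0 : 0 ≤ q) (hq : q < 1/2) (n c : ℕ)
    (hn : 1 ≤ n) (hc : c ≤ n) (h2 : n ≤ 2 * c) :
    q ^ c * (1 - q) ^ (n - c) ≤ (q * (1 - q)) ^ ((n : ℝ)/2) := by
  have hq1 : 0 < 1 - q := by linarith
  rcases eq_or_lt_of_le hq0 with h0 | hqpos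
  · have hc0 : c ≠ 0 := by omega
    rw [← h0, zero_pow hc0, zero_mul]
    positivity
  · have hle : q ≤ 1 - q := by linarith
    have hcast : (n:ℝ) ≤ 2*c := by exact_mod_cast h2
    have he : (0:ℝ) ≤ (c:ℝ) - (n:ℝ)/2 := by linarith
    have key : q ^ ((c:ℝ) - (n:ℝ)/2) ≤ (1-q) ^ ((c:ℝ) - (n:ℝ)/2) :=
      Real.rpow_le_rpow hq0 hle he
    have e1 : q ^ c = q ^ ((n:ℝ)/2) * q ^ ((c:ℝ) - (n:ℝ)/2) := by
      rw [← Real.rpow_natCast q c, ← Real.rpow_add hqpos]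
      ring_nf
    have e2 : (1-q) ^ ((n:ℝ)/2) = (1-q) ^ ((c:ℝ) - (n:ℝ)/2) * (1-q)^(n - c) := by
      rw [← Real.rpow_natCast (1-q) (n-c), ← Real.rpow_add hq1]
      congr 1
      have : ((n - c : ℕ):ℝ) = (n:ℝ) - c := by
        push_cast [Nat.cast_sub hc]; ring
      rw [this]; ring
    rw [Real.mul_rpow hq0 hq1.le, e1, e2]
    calc q ^ ((n:ℝ)/2) * q ^ ((c:ℝ) - (n:ℝ)/2) * (1-q)^(n-c)
        ≤ q ^ ((n:ℝ)/2) * (1-q) ^ ((c:ℝ) - (n:ℝ)/2) * (1-q)^(n-c) := by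
          have h1 : (0:ℝ) ≤ q ^ ((n:ℝ)/2) := Real.rpow_nonneg hq0 _
          have h2' : (0:ℝ) ≤ (1-q)^(n-c) := by positivity
          gcongr
      _ = q ^ ((n:ℝ)/2) * ((1-q) ^ ((c:ℝ) - (n:ℝ)/2) * (1-q)^(n-c)) := by ring

theorem repetition_gadget_failure_probability (k : ℕ) (hk : 2 ≤ k)
    (q : ℝ) (hq0 : 0 ≤ q) (hq : q < 1 / 2)
    (w : (Fin k → Bool) → ℝ)
    (hw : ∀ s : Fin k → Bool, w s = ∏ i : Fin k, (if s i then q else 1 - q))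
    (root : Fin k) (hroot : root = ⟨k - 1, by omega⟩)
    (Maj : (Fin k → Bool) → Bool)
    (hMaj : ∀ s : Fin k → Bool, Maj s = decide (k - 1 ≤
      2 * (Finset.univ.filter fun i : Fin k => i ≠ root ∧ s i ≠ s root).card)) :
    ∑ s : Fin k → Bool, w s * (if Maj s ≠ s root then (1 : ℝ) else 0) ≤
      (4 * q * (1 - q)) ^ (((k : ℝ) - 1) / 2) := by
  classical
  have hq1 : 0 < 1 - q := by linarith
  set n : ℕ := k - 1 with hn
  have hn1 : 1 ≤ n := by omega
  have hkr : ((k : ℝ) - 1) = (n : ℝ) := by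
    rw [hn]; push_cast [Nat.cast_sub (by omega : 1 ≤ k)]; ring
  set C : ℝ := (q * (1 - q)) ^ ((n : ℝ)/2) with hC
  have hC0 : 0 ≤ C := Real.rpow_nonneg (by nlinarith) _
  -- pointwise bound
  have hpt : ∀ s : Fin k → Bool,
      w s * (if Maj s ≠ s root then (1 : ℝ) else 0) ≤
        (if s root then q else 1 - q) * C := by
    intro s
    by_cases hfail : Maj s ≠ s root
    · rw [if_pos hfail, mul_one]
      set t : Finset (Fin k) := Finset.univ.erase root with ht
      have htcard : t.card = n := by
        rw [ht, Finset.card_erase_of_mem (mem_univ root), Finset.card_univ,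
          Fintype.card_fin]
      set a : ℕ := (t.filter (fun i => s i = true)).card with ha
      set b : ℕ := (t.filter (fun i => ¬ (s i = true))).card with hb
      have hab : a + b = n := by
        rw [ha, hb, Finset.card_filter_add_card_filter_not, htcard]
      have hprod : w s = (if s root then q else 1 - q) *
          (q ^ a * (1 - q) ^ b) := by
        rw [hw s, ← Finset.mul_prod_erase Finset.univ _ (mem_univ root), ← ht]
        congr 1
        rw [Finset.prod_ite, Finset.prod_const, Finset.prod_const]
      set m : ℕ := (Finset.univ.filter fun i : Fin k => i ≠ root ∧ s i ≠ s root).card with hm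
      have hna : n ≤ 2 * a := by
        cases hroot_val : s root with
        | false =>
          -- Maj s = true, so n ≤ 2 m, and m = a
          have hmaj : Maj s = true := by
            cases hMs : Maj s with
            | true => rfl
            | false => exact absurd (by rw [hMs, hroot_val]) hfail
          have hm2 : n ≤ 2 * m := by
            have := (hMaj s).symm.trans hmaj
            rw [hm]
            exact of_decide_eq_true this
          have hma : m = a := by
            rw [hm, ha]
            congr 1
            ext i
            simp [ht, Finset.mem_filter, Finset.mem_erase, hroot_val, and_comm]
          omega
        | true =>
          -- Maj s = false, so ¬ (n ≤ 2 m), and m = b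
          have hmaj : Maj s = false := by
            cases hMs : Maj s with
            | false => rfl
            | true => exact absurd (by rw [hMs, hroot_val]) hfail
          have hm2 : ¬ (n ≤ 2 * m) := by
            have := (hMaj s).symm.trans hmaj
            rw [hm]
            exact of_decide_eq_false this
          have hmb : m = b := by
            rw [hm, hb]
            congr 1
            ext i
            simp [ht, Finset.mem_filter, Finset.mem_erase, hroot_val, and_comm]
          omega
      have hbound : q ^ a * (1 - q) ^ b ≤ C := by
        have : b = n - a := by omega
        rw [this, hC]
        exact aux_pow_le q hq0 hq n a hn1 (by omega) hna
      rw [hprod]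
      have hr0 : 0 ≤ (if s root then q else 1 - q) := by
        split_ifs <;> linarith
      exact mul_le_mul_of_nonneg_left hbound hr0
    · rw [if_neg hfail, mul_zero]
      have hr0 : 0 ≤ (if s root then q else 1 - q) := by
        split_ifs <;> linarith
      positivity
  calc ∑ s : Fin k → Bool, w s * (if Maj s ≠ s root then (1 : ℝ) else 0)
      ≤ ∑ s : Fin k → Bool, (if s root then q else 1 - q) * C :=
        Finset.sum_le_sum (fun s _ => hpt s)
    _ = (∑ s : Fin k → Bool, (if s root then q else 1 - q)) * C := by
        rw [Finset.sum_mul]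
    _ = 2 ^ n * C := by
        congr 1
        have h := Fintype.sum_equiv (Equiv.funSplitAt root Bool)
          (fun s : Fin k → Bool => if s root then q else 1 - q)
          (fun p => if p.1 then q else 1 - q) (fun s => by simp)
        have hcard : Fintype.card ({i : Fin k // i ≠ root} → Bool) = 2 ^ n := by
          rw [Fintype.card_fun, Fintype.card_bool]
          congr 1
          rw [Fintype.card_subtype_compl, Fintype.card_subtype_eq, Fintype.card_fin]
        rw [h, Fintype.sum_prod_type, Fintype.sum_bool]
        simp [Finset.sum_const, Finset.card_univ, hcard]
    _ = (4 * q * (1 - q)) ^ (((k : ℝ) - 1) / 2) := by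
        rw [hkr, hC]
        have hmul : ((4:ℝ) * q * (1-q)) = 4 * (q * (1-q)) := by ring
        have h2n : ((4:ℝ)) ^ ((n:ℝ)/2) = 2 ^ n := by
          rw [show (4:ℝ) = (2:ℝ)^(2:ℕ) by norm_num, ← Real.rpow_natCast (2:ℝ) 2,
            ← Real.rpow_mul (by norm_num), ← Real.rpow_natCast (2:ℝ) n]
          congr 1
          push_cast
          ring
        rw [hmul, Real.mul_rpow (by norm_num) (mul_nonneg hq0 hq1.le), h2n]
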